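/- (Phase B can lose optimality) There exists a finite set X = X₁ ∪ X₂ with objective J : X → ℝ² such that: the center point of subproblem 2 (a minimizer of (J₁+J₂)/2 over X₂) is dominated by a point of X*₁, yet X*₂ ∩ X* ≠ ∅; i.e., pruning a subproblem because its weighted-sum center point is dominated can discard genuinely Pareto-optimal points. -/
import Mathlib


/-- The Pareto (non-dominated) subset of `S ⊆ ℝ²` under the componentwise order. -/
def pareto (S : Set (ℝ × ℝ)) : Set (ℝ × ℝ) :=
  {s ∈ S | ¬ ∃ t ∈ S, t ≤ s ∧ t ≠ s}

/-- Phase B can lose optimality: there exist finite subproblems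
`X₁, X₂ ⊆ ℝ²` (objective = identity) such that the weighted-sum center point of
`X₂` is dominated by a point of `P(X₁)`, yet `P(X₂) ∩ P(X₁ ∪ X₂) ≠ ∅`. -/
theorem phaseB_can_lose_optimality :
    ∃ X₁ X₂ : Set (ℝ × ℝ), X₁.Finite ∧ X₂.Finite ∧ X₁.Nonempty ∧ X₂.Nonempty ∧
      ∃ c ∈ X₂,
        (∀ t ∈ X₂, 0.5 * c.1 + 0.5 * c.2 ≤ 0.5 * t.1 + 0.5 * t.2) ∧
        (∃ p ∈ pareto X₁, p ≤ c ∧ p ≠ c) ∧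
        (pareto X₂ ∩ pareto (X₁ ∪ X₂)).Nonempty := by
  refine ⟨{((0 : ℝ), (0 : ℝ))}, {((1 : ℝ), (1 : ℝ)), ((-1 : ℝ), (4 : ℝ))},
    Set.finite_singleton _, (Set.finite_singleton _).insert _,
    ⟨_, rfl⟩, ⟨_, Set.mem_insert _ _⟩, ((1 : ℝ), (1 : ℝ)), Set.mem_insert _ _, ?_, ?_, ?_⟩
  · rintro t (rfl | rfl) <;> norm_num
  · refine ⟨((0 : ℝ), (0 : ℝ)), ⟨rfl, ?_⟩, ?_, ?_⟩
    · rintro ⟨t, rfl, _, hne⟩; exact hne rfl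
    · exact Prod.mk_le_mk.mpr ⟨by norm_num, by norm_num⟩
    · simp
  · refine ⟨((-1 : ℝ), (4 : ℝ)), ⟨Set.mem_insert_of_mem _ rfl, ?_⟩,
      Set.mem_union_right _ (Set.mem_insert_of_mem _ rfl), ?_⟩
    · rintro ⟨t, (rfl | rfl), hle, hne⟩
      · exact absurd (Prod.mk_le_mk.mp hle).1 (by norm_num)
      · exact hne rfl
    · rintro ⟨t, (rfl | rfl | rfl), hle, hne⟩
      · exact absurd (Prod.mk_le_mk.mp hle).1 (by norm_num)
      · exact absurd (Prod.mk_le_mk.mp hle).1 (by norm_num)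
      · exact hne rfl
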